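/- Let Ω be an open subset of ℝ², let u : Ω → ℝ be doubly increasing (increasing in both variables), and let v : Ω → ℝ be decreasing in x and increasing in y. Let A be the subset of Ω where both u and v are differentiable and u_x v_y − u_y v_x > 0. Then the map φ : A → ℝ², φ(x,y) = (u(x,y), v(x,y)), is injective. -/

import Mathlib

open Set

/-- If `f` is differentiable at `a` and constant on a short segment from `a` in
direction `d` (within the open set `Ω`), then the directional derivative vanishes. -/
lemma fderiv_dir_zero {Ω : Set (ℝ × ℝ)} (hΩ : IsOpen Ω) (f : ℝ × ℝ → ℝ) (a : ℝ × ℝ)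
    (ha : a ∈ Ω) (hf : DifferentiableAt ℝ f a) (d : ℝ × ℝ) (δ : ℝ) (hδ : 0 < δ)
    (hc : ∀ t : ℝ, 0 ≤ t → t < δ → a + t • d ∈ Ω → f (a + t • d) = f a) :
    fderiv ℝ f a d = 0 := by
  obtain ⟨r, hr, hball⟩ := Metric.isOpen_iff.1 hΩ a ha
  set ε : ℝ := min δ (r / (‖d‖ + 1)) with hεdef
  have hd1 : (0:ℝ) < ‖d‖ + 1 := by positivity
  have hε : 0 < ε := lt_min hδ (div_pos hr hd1)
  have hmem : ∀ t : ℝ, 0 ≤ t → t < ε → a + t • d ∈ Ω := by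
    intro t ht htε
    apply hball
    rw [Metric.mem_ball, dist_eq_norm, add_sub_cancel_left, norm_smul, Real.norm_of_nonneg ht]
    have h2 : t < r / (‖d‖ + 1) := lt_of_lt_of_le htε (min_le_right _ _)
    have h3 : t * (‖d‖ + 1) < r := (lt_div_iff₀ hd1).mp h2
    nlinarith [norm_nonneg d]
  have hline : HasDerivAt (fun t : ℝ => a + t • d) d 0 := by
    simpa using ((hasDerivAt_id (0:ℝ)).smul_const d).const_add a
  have hg : HasDerivAt (fun t : ℝ => f (a + t • d)) (fderiv ℝ f a d) 0 := by
    have h0 : a + (0:ℝ) • d = a := by simp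
    have hF : HasFDerivAt f (fderiv ℝ f a) ((fun t : ℝ => a + t • d) 0) := by
      simpa [h0] using hf.hasFDerivAt
    exact hF.comp_hasDerivAt 0 hline
  have hgW : HasDerivWithinAt (fun t : ℝ => f (a + t • d)) (fderiv ℝ f a d) (Set.Ici 0) 0 :=
    hg.hasDerivWithinAt
  have hcW : HasDerivWithinAt (fun t : ℝ => f (a + t • d)) 0 (Set.Ici 0) 0 := by
    have hev : (fun t : ℝ => f (a + t • d)) =ᶠ[nhdsWithin 0 (Set.Ici (0:ℝ))]
        (fun _ => f a) := by
      filter_upwards [Ico_mem_nhdsGE_of_mem (⟨le_refl 0, hε⟩ : (0:ℝ) ∈ Set.Ico 0 ε)] with t ht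
      exact hc t ht.1 (lt_of_lt_of_le ht.2 (min_le_left _ _)) (hmem t ht.1 ht.2)
    exact (hasDerivWithinAt_const 0 _ (f a)).congr_of_eventuallyEq hev
      (by simpa using hc 0 le_rfl hδ (by simpa using ha))
  have h1 := hgW.derivWithin (uniqueDiffOn_Ici 0 0 Set.self_mem_Ici)
  have h2 := hcW.derivWithin (uniqueDiffOn_Ici 0 0 Set.self_mem_Ici)
  rw [← h1, h2]

/-- Quadrant I case: `b` is (weakly) up-right of `a` and `a ≠ b`. -/
lemma quadI {Ω : Set (ℝ × ℝ)} (hΩ : IsOpen Ω) (u v : ℝ × ℝ → ℝ)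
    (hu : ∀ p ∈ Ω, ∀ q ∈ Ω, p.1 ≤ q.1 → p.2 ≤ q.2 → u p ≤ u q)
    (hv : ∀ p ∈ Ω, ∀ q ∈ Ω, q.1 ≤ p.1 → p.2 ≤ q.2 → v p ≤ v q)
    (a b : ℝ × ℝ) (ha : a ∈ Ω) (hb : b ∈ Ω)
    (hdu : DifferentiableAt ℝ u a) (hdv : DifferentiableAt ℝ v a)
    (h1 : a.1 ≤ b.1) (h2 : a.2 ≤ b.2) (hne : a ≠ b)
    (hueq : u a = u b) (hveq : v a = v b) :
    fderiv ℝ u a (1, 0) * fderiv ℝ v a (0, 1)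
      - fderiv ℝ u a (0, 1) * fderiv ℝ v a (1, 0) = 0 := by
  have hco1 : ∀ t : ℝ, a + t • ((1:ℝ), (0:ℝ)) = (a.1 + t, a.2) := by
    intro t; ext <;> simp
  have hco2 : ∀ t : ℝ, a + t • ((0:ℝ), (1:ℝ)) = (a.1, a.2 + t) := by
    intro t; ext <;> simp
  rcases h1.lt_or_eq with h1' | h1'
  · -- a.1 < b.1 : u is constant rightwards, so u_x = 0
    have hux : fderiv ℝ u a (1, 0) = 0 := by
      apply fderiv_dir_zero hΩ u a ha hdu _ (b.1 - a.1) (by linarith)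
      intro t ht htδ hrΩ
      rw [hco1 t] at hrΩ ⊢
      refine le_antisymm ?_ ?_
      · calc u (a.1 + t, a.2) ≤ u b := hu _ hrΩ b hb (by dsimp; linarith) (by dsimp; linarith)
          _ = u a := hueq.symm
      · exact hu a ha _ hrΩ (by dsimp; linarith) le_rfl
    rcases h2.lt_or_eq with h2' | h2'
    · -- also a.2 < b.2 : u constant upwards, u_y = 0
      have huy : fderiv ℝ u a (0, 1) = 0 := by
        apply fderiv_dir_zero hΩ u a ha hdu _ (b.2 - a.2) (by linarith)
        intro t ht htδ hrΩ
        rw [hco2 t] at hrΩ ⊢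
        refine le_antisymm ?_ ?_
        · calc u (a.1, a.2 + t) ≤ u b := hu _ hrΩ b hb (by dsimp; linarith) (by dsimp; linarith)
            _ = u a := hueq.symm
        · exact hu a ha _ hrΩ le_rfl (by dsimp; linarith)
      rw [hux, huy]; ring
    · -- a.2 = b.2 : v constant rightwards, v_x = 0
      have hvx : fderiv ℝ v a (1, 0) = 0 := by
        apply fderiv_dir_zero hΩ v a ha hdv _ (b.1 - a.1) (by linarith)
        intro t ht htδ hrΩ
        rw [hco1 t] at hrΩ ⊢
        refine le_antisymm (hv _ hrΩ a ha (by dsimp; linarith) le_rfl) ?_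
        calc v a = v b := hveq
          _ ≤ v (a.1 + t, a.2) := hv b hb _ hrΩ (by dsimp; linarith) (by dsimp; linarith)
      rw [hux, hvx]; ring
  · -- a.1 = b.1, hence a.2 < b.2 : u and v constant upwards
    have h2' : a.2 < b.2 := by
      rcases h2.lt_or_eq with h | h
      · exact h
      · exact absurd (Prod.ext h1' h) hne
    have huy : fderiv ℝ u a (0, 1) = 0 := by
      apply fderiv_dir_zero hΩ u a ha hdu _ (b.2 - a.2) (by linarith)
      intro t ht htδ hrΩ
      rw [hco2 t] at hrΩ ⊢
      refine le_antisymm ?_ ?_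
      · calc u (a.1, a.2 + t) ≤ u b := hu _ hrΩ b hb (by dsimp; linarith) (by dsimp; linarith)
          _ = u a := hueq.symm
      · exact hu a ha _ hrΩ le_rfl (by dsimp; linarith)
    have hvy : fderiv ℝ v a (0, 1) = 0 := by
      apply fderiv_dir_zero hΩ v a ha hdv _ (b.2 - a.2) (by linarith)
      intro t ht htδ hrΩ
      rw [hco2 t] at hrΩ ⊢
      refine le_antisymm ?_ ?_
      · calc v (a.1, a.2 + t) ≤ v b := hv _ hrΩ b hb (by dsimp; linarith) (by dsimp; linarith)
          _ = v a := hveq.symm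
      · exact hv a ha _ hrΩ le_rfl (by dsimp; linarith)
    rw [huy, hvy]; ring

/-- Quadrant II case: `b` is (weakly) up-left of `a` and `a ≠ b`. -/
lemma quadII {Ω : Set (ℝ × ℝ)} (hΩ : IsOpen Ω) (u v : ℝ × ℝ → ℝ)
    (hu : ∀ p ∈ Ω, ∀ q ∈ Ω, p.1 ≤ q.1 → p.2 ≤ q.2 → u p ≤ u q)
    (hv : ∀ p ∈ Ω, ∀ q ∈ Ω, q.1 ≤ p.1 → p.2 ≤ q.2 → v p ≤ v q)
    (a b : ℝ × ℝ) (ha : a ∈ Ω) (hb : b ∈ Ω)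
    (hdu : DifferentiableAt ℝ u a) (hdv : DifferentiableAt ℝ v a)
    (h1 : b.1 ≤ a.1) (h2 : a.2 ≤ b.2) (hne : a ≠ b)
    (hueq : u a = u b) (hveq : v a = v b) :
    fderiv ℝ u a (1, 0) * fderiv ℝ v a (0, 1)
      - fderiv ℝ u a (0, 1) * fderiv ℝ v a (1, 0) = 0 := by
  have hco1 : ∀ t : ℝ, a + t • ((-1:ℝ), (0:ℝ)) = (a.1 - t, a.2) := by
    intro t; ext <;> simp <;> ring
  have hco2 : ∀ t : ℝ, a + t • ((0:ℝ), (1:ℝ)) = (a.1, a.2 + t) := by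
    intro t; ext <;> simp
  have hneg : ∀ f : ℝ × ℝ → ℝ, fderiv ℝ f a ((-1:ℝ), (0:ℝ)) = - fderiv ℝ f a (1, 0) := by
    intro f
    rw [show ((-1:ℝ), (0:ℝ)) = -((1:ℝ), (0:ℝ)) by ext <;> simp, map_neg]
  rcases h1.lt_or_eq with h1' | h1'
  · -- b.1 < a.1 : v constant leftwards, v_x = 0
    have hvx : fderiv ℝ v a (1, 0) = 0 := by
      have : fderiv ℝ v a ((-1:ℝ), (0:ℝ)) = 0 := by
        apply fderiv_dir_zero hΩ v a ha hdv _ (a.1 - b.1) (by linarith)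
        intro t ht htδ hrΩ
        rw [hco1 t] at hrΩ ⊢
        refine le_antisymm ?_ (hv a ha _ hrΩ (by dsimp; linarith) le_rfl)
        calc v (a.1 - t, a.2) ≤ v b := hv _ hrΩ b hb (by dsimp; linarith) (by dsimp; linarith)
          _ = v a := hveq.symm
      rw [hneg v] at this; linarith
    rcases h2.lt_or_eq with h2' | h2'
    · -- also a.2 < b.2 : v constant upwards, v_y = 0
      have hvy : fderiv ℝ v a (0, 1) = 0 := by
        apply fderiv_dir_zero hΩ v a ha hdv _ (b.2 - a.2) (by linarith)
        intro t ht htδ hrΩ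
        rw [hco2 t] at hrΩ ⊢
        refine le_antisymm ?_ (hv a ha _ hrΩ le_rfl (by dsimp; linarith))
        calc v (a.1, a.2 + t) ≤ v b := hv _ hrΩ b hb (by dsimp; linarith) (by dsimp; linarith)
          _ = v a := hveq.symm
      rw [hvx, hvy]; ring
    · -- a.2 = b.2 : u constant leftwards, u_x = 0
      have hux : fderiv ℝ u a (1, 0) = 0 := by
        have : fderiv ℝ u a ((-1:ℝ), (0:ℝ)) = 0 := by
          apply fderiv_dir_zero hΩ u a ha hdu _ (a.1 - b.1) (by linarith)
          intro t ht htδ hrΩ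
          rw [hco1 t] at hrΩ ⊢
          refine le_antisymm (hu _ hrΩ a ha (by dsimp; linarith) le_rfl) ?_
          calc u a = u b := hueq
            _ ≤ u (a.1 - t, a.2) := hu b hb _ hrΩ (by dsimp; linarith) (by dsimp; linarith)
        rw [hneg u] at this; linarith
      rw [hux, hvx]; ring
  · -- a.1 = b.1, hence a.2 < b.2 : u and v constant upwards
    have h2' : a.2 < b.2 := by
      rcases h2.lt_or_eq with h | h
      · exact h
      · exact absurd (Prod.ext h1'.symm h) hne
    have huy : fderiv ℝ u a (0, 1) = 0 := by
      apply fderiv_dir_zero hΩ u a ha hdu _ (b.2 - a.2) (by linarith)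
      intro t ht htδ hrΩ
      rw [hco2 t] at hrΩ ⊢
      refine le_antisymm ?_ (hu a ha _ hrΩ le_rfl (by dsimp; linarith))
      calc u (a.1, a.2 + t) ≤ u b := hu _ hrΩ b hb (by dsimp; linarith) (by dsimp; linarith)
        _ = u a := hueq.symm
    have hvy : fderiv ℝ v a (0, 1) = 0 := by
      apply fderiv_dir_zero hΩ v a ha hdv _ (b.2 - a.2) (by linarith)
      intro t ht htδ hrΩ
      rw [hco2 t] at hrΩ ⊢
      refine le_antisymm ?_ (hv a ha _ hrΩ le_rfl (by dsimp; linarith))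
      calc v (a.1, a.2 + t) ≤ v b := hv _ hrΩ b hb (by dsimp; linarith) (by dsimp; linarith)
        _ = v a := hveq.symm
    rw [huy, hvy]; ring

/-- If `u` is doubly increasing and `v` is decreasing in `x` and increasing in `y`
on an open set `Ω`, then `(u, v)` is injective on the set of points where both are
differentiable and the Jacobian determinant `u_x v_y - u_y v_x` is positive. -/
theorem stmt7 (Ω : Set (ℝ × ℝ)) (hΩ : IsOpen Ω) (u v : ℝ × ℝ → ℝ)
    (hu : ∀ p ∈ Ω, ∀ q ∈ Ω, p.1 ≤ q.1 → p.2 ≤ q.2 → u p ≤ u q)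
    (hv : ∀ p ∈ Ω, ∀ q ∈ Ω, q.1 ≤ p.1 → p.2 ≤ q.2 → v p ≤ v q) :
    Set.InjOn (fun p => (u p, v p))
      {p ∈ Ω | DifferentiableAt ℝ u p ∧ DifferentiableAt ℝ v p ∧
        0 < fderiv ℝ u p (1, 0) * fderiv ℝ v p (0, 1)
          - fderiv ℝ u p (0, 1) * fderiv ℝ v p (1, 0)} := by
  intro p hp q hq hpq
  obtain ⟨hpΩ, hpu, hpv, hpj⟩ := hp
  obtain ⟨hqΩ, hqu, hqv, hqj⟩ := hq
  simp only [Prod.mk.injEq] at hpq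
  obtain ⟨hueq, hveq⟩ := hpq
  by_contra hne
  rcases le_total p.1 q.1 with h1 | h1 <;> rcases le_total p.2 q.2 with h2 | h2
  · have := quadI hΩ u v hu hv p q hpΩ hqΩ hpu hpv h1 h2 hne hueq hveq
    linarith
  · have := quadII hΩ u v hu hv q p hqΩ hpΩ hqu hqv h1 h2 (Ne.symm hne) hueq.symm hveq.symm
    linarith
  · have := quadII hΩ u v hu hv p q hpΩ hqΩ hpu hpv h1 h2 hne hueq hveq
    linarith
  · have := quadI hΩ u v hu hv q p hqΩ hpΩ hqu hqv h1 h2 (Ne.symm hne) hueq.symm hveq.symm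
    linarith
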